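/- Every L-algebra 𝒜 of quaternion type on an infinite-dimensional real Banach space X is contained in the algebra 𝒜_π, for some closed and regular representation π of the quaternion group G_ℍ by linear bijections of a dense linear subspace E of X with π(1) = id_E and π(−1) = −id_E. -/

import Mathlib

open Filter Topology

noncomputable section

variable {X : Type*} [NormedAddCommGroup X] [NormedSpace ℝ X]

/-- A bounded operator is of finite rank if its range is finite-dimensional. -/
def FiniteRank (T : X →L[ℝ] X) : Prop :=
  FiniteDimensional ℝ (LinearMap.range (T : X →ₗ[ℝ] X))

/-- Transitivity: every orbit of a nonzero vector is dense. -/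
def IsTransitiveAlg (A : Set (X →L[ℝ] X)) : Prop :=
  ∀ x : X, x ≠ 0 → ∀ y : X, ∀ ε > 0, ∃ T ∈ A, ‖T x - y‖ < ε

/-- A set of operators is an "L-set" if it is transitive and contains
a nonzero finite-rank operator. -/
def IsLSet (A : Set (X →L[ℝ] X)) : Prop :=
  IsTransitiveAlg A ∧ ∃ T ∈ A, T ≠ 0 ∧ FiniteRank T

/-- `A^F`: the finite-rank elements of `A`. -/
def AF (A : Set (X →L[ℝ] X)) : Set (X →L[ℝ] X) :=
  {T | T ∈ A ∧ FiniteRank T}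

/-- `X^F = span {T x : T ∈ A^F, x ∈ X}`. -/
def XF (A : Set (X →L[ℝ] X)) : Submodule ℝ X :=
  Submodule.span ℝ {y | ∃ T ∈ AF A, ∃ x : X, T x = y}

lemma mapsto_XF {A : Set (X →L[ℝ] X)} {T : X →L[ℝ] X} (hT : T ∈ AF A) :
    ∀ x ∈ XF A, (T : X →ₗ[ℝ] X) x ∈ XF A :=
  fun x _ => Submodule.subset_span ⟨T, hT, x, rfl⟩

/-- `𝔻`: the algebra of all `ℝ`-linear endomorphisms of `X^F` commuting with the
restriction to `X^F` of every operator in `A^F`. -/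
def DD (A : Set (X →L[ℝ] X)) : Subalgebra ℝ (Module.End ℝ (XF A)) :=
  Subalgebra.centralizer ℝ
    {S | ∃ T : X →L[ℝ] X, ∃ hT : T ∈ AF A, S = (T : X →ₗ[ℝ] X).restrict (mapsto_XF hT)}

def RealType (A : Set (X →L[ℝ] X)) : Prop := Nonempty (DD A ≃ₐ[ℝ] ℝ)
def ComplexType (A : Set (X →L[ℝ] X)) : Prop := Nonempty (DD A ≃ₐ[ℝ] ℂ)
def QuaternionType (A : Set (X →L[ℝ] X)) : Prop := Nonempty (DD A ≃ₐ[ℝ] Quaternion ℝ)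

/-- `A` is dense: on any finite linearly independent family, elements of `A`
approximate arbitrary prescribed values. -/
def IsDenseAlg (A : Set (X →L[ℝ] X)) : Prop :=
  ∀ ε > 0, ∀ n : ℕ, ∀ x : Fin n → X, LinearIndependent ℝ x →
    ∀ y : Fin n → X, ∃ T ∈ A, ∀ i, ‖T (x i) - y i‖ < ε

/-- `A` is `(1/k)`-dense. -/
def IsFracDense (k : ℕ) (A : Set (X →L[ℝ] X)) : Prop :=
  ∀ ε > 0, ∀ n : ℕ, ∀ x : Fin (k * n) → X, LinearIndependent ℝ x →
    ∀ y : Fin n → X, ∃ j : Fin n → Fin (k * n), ∃ T ∈ A,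
      ∀ i, ‖y i - T (x (j i))‖ < ε

/-- `T` lies in the closure of `A` in the strong operator topology. -/
def InSOTClosure (A : Set (X →L[ℝ] X)) (T : X →L[ℝ] X) : Prop :=
  ∀ ε > 0, ∀ s : Finset X, ∃ S ∈ A, ∀ x ∈ s, ‖S x - T x‖ < ε

/-- Closure of `A` in the strong operator topology. -/
def SOTcl (A : Set (X →L[ℝ] X)) : Set (X →L[ℝ] X) := {T | InSOTClosure A T}

/-- `A` is closed in the strong operator topology. -/
def SOTClosed (A : Set (X →L[ℝ] X)) : Prop :=
  ∀ T : X →L[ℝ] X, InSOTClosure A T → T ∈ A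

/-- A Lomonosov set: transitive, SOT-closed, containing a nonzero compact operator. -/
def IsLomonosov (A : Set (X →L[ℝ] X)) : Prop :=
  IsTransitiveAlg A ∧ SOTClosed A ∧ ∃ T ∈ A, T ≠ 0 ∧ IsCompactOperator (⇑T)

/-- Similarity of operator algebras. -/
def SimilarAlg (A B : Set (X →L[ℝ] X)) : Prop :=
  ∃ T : X ≃L[ℝ] X,
    (fun S => (T : X →L[ℝ] X).comp (S.comp ((T.symm : X →L[ℝ] X)))) '' A = B

/-- A partial complex structure: a densely defined operator `S` with `S ∘ S = -1`
(equivalently `S⁻¹ = -S`) mapping its domain onto itself. -/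
structure PCS (X : Type*) [NormedAddCommGroup X] [NormedSpace ℝ X] where
  domain : Submodule ℝ X
  dense' : Dense (domain : Set X)
  map : domain →ₗ[ℝ] domain
  anti : ∀ x : domain, map (map x) = -x

/-- A PCS is closed if its graph is closed in `X × X`. -/
def PCSClosed (S : PCS X) : Prop :=
  IsClosed (Set.range fun x : S.domain => ((x : X), (S.map x : X)))

/-- The algebra `𝒜_S` of all bounded operators leaving `D(S)` invariant and
commuting with `S` on `D(S)`. -/
def AlgS (S : PCS X) : Set (X →L[ℝ] X) :=
  {T | ∀ x : S.domain, ∃ y : S.domain, (y : X) = T x ∧ T (S.map x : X) = (S.map y : X)}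

/-- A representation of the quaternion group `G_ℍ` by linear bijections of a dense
subspace of `X`, with `π(1) = id` and `π(-1) = -id`. -/
structure QRep (X : Type*) [NormedAddCommGroup X] [NormedSpace ℝ X] where
  domain : Submodule ℝ X
  dense' : Dense (domain : Set X)
  pi : QuaternionGroup 2 → Module.End ℝ domain
  pi_one : pi 1 = 1
  pi_mul : ∀ g h, pi (g * h) = pi g * pi h
  pi_neg_one : pi (QuaternionGroup.a 2) = -1

/-- The representation is closed. -/
def QRepClosed (ρ : QRep X) : Prop :=
  ∀ (x : ℕ → ρ.domain) (w : QuaternionGroup 2 → X),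
    (∀ g, Tendsto (fun n => (ρ.pi g (x n) : X)) atTop (𝓝 (w g))) →
    ∃ z : ρ.domain, ∀ g, w g = (ρ.pi g z : X)

/-- The representation is regular: the functionals bounded on the orbit of the
representation are weak*-dense in the dual. -/
def QRepRegular (ρ : QRep X) : Prop :=
  Dense ((StrongDual.toWeakDual) ''
    {f : StrongDual ℝ X |
      ∃ C > 0, ∀ g : QuaternionGroup 2, ∀ x : ρ.domain, |f (ρ.pi g x : X)| ≤ C * ‖(x : X)‖})

/-- The algebra `𝒜_π`. -/
def AlgPi (ρ : QRep X) : Set (X →L[ℝ] X) :=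
  {T | ∀ x : ρ.domain, ∃ y : ρ.domain, (y : X) = T x ∧
    ∀ g : QuaternionGroup 2, T (ρ.pi g x : X) = (ρ.pi g y : X)}


namespace Stmt17Aux

variable {X : Type*} [NormedAddCommGroup X] [NormedSpace ℝ X]

lemma finiteRank_mul_left (T S : X →L[ℝ] X) (hS : FiniteRank S) : FiniteRank (T * S) := by
  have h1 : LinearMap.range ((T * S : X →L[ℝ] X) : X →ₗ[ℝ] X) ≤ (LinearMap.range (S : X →ₗ[ℝ] X)).map (T : X →ₗ[ℝ] X) := by
    rintro y ⟨x, rfl⟩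
    exact ⟨S x, ⟨x, rfl⟩, rfl⟩
  have : FiniteDimensional ℝ (LinearMap.range (S : X →ₗ[ℝ] X)) := hS
  exact Submodule.finiteDimensional_of_le h1

lemma finiteRank_mul_right (T S : X →L[ℝ] X) (hT : FiniteRank T) : FiniteRank (T * S) := by
  have h1 : LinearMap.range ((T * S : X →L[ℝ] X) : X →ₗ[ℝ] X) ≤ LinearMap.range (T : X →ₗ[ℝ] X) := by
    rintro y ⟨x, rfl⟩
    exact ⟨S x, rfl⟩
  have : FiniteDimensional ℝ (LinearMap.range (T : X →ₗ[ℝ] X)) := hT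
  exact Submodule.finiteDimensional_of_le h1

variable {A : NonUnitalSubalgebra ℝ (X →L[ℝ] X)}

lemma mul_mem_AF_left {T S : X →L[ℝ] X} (hT : T ∈ (A : Set (X →L[ℝ] X)))
    (hS : S ∈ AF (A : Set (X →L[ℝ] X))) : T * S ∈ AF (A : Set (X →L[ℝ] X)) :=
  ⟨A.mul_mem hT hS.1, finiteRank_mul_left T S hS.2⟩

lemma mul_mem_AF_right {T S : X →L[ℝ] X} (hT : T ∈ AF (A : Set (X →L[ℝ] X)))
    (hS : S ∈ (A : Set (X →L[ℝ] X))) : T * S ∈ AF (A : Set (X →L[ℝ] X)) :=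
  ⟨A.mul_mem hT.1 hS, finiteRank_mul_right T S hT.2⟩

/-- Separation: for every nonzero `v` some finite-rank element of `A` does not kill it. -/
lemma exists_AF_ne_zero (hA : IsLSet (A : Set (X →L[ℝ] X))) {v : X} (hv : v ≠ 0) :
    ∃ T ∈ AF (A : Set (X →L[ℝ] X)), T v ≠ 0 := by
  obtain ⟨T₀, hT₀A, hT₀ne, hT₀fr⟩ := hA.2
  obtain ⟨y, hy⟩ : ∃ y, T₀ y ≠ 0 := by
    by_contra h
    push_neg at h
    exact hT₀ne (ContinuousLinearMap.ext fun y => by simpa using h y)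
  have hTy : (0:ℝ) < ‖T₀ y‖ := norm_pos_iff.2 hy
  have hden : (0:ℝ) < ‖T₀‖ + 1 := by positivity
  obtain ⟨R, hR, hRv⟩ := hA.1 v hv y (‖T₀ y‖ / (‖T₀‖ + 1)) (by positivity)
  refine ⟨T₀ * R, mul_mem_AF_right ⟨hT₀A, hT₀fr⟩ hR, ?_⟩
  have hkey : ‖T₀ (R v) - T₀ y‖ < ‖T₀ y‖ := by
    have h1 : ‖T₀ (R v) - T₀ y‖ ≤ ‖T₀‖ * ‖R v - y‖ := by
      rw [← map_sub]; exact T₀.le_opNorm _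
    have h2 : ‖T₀‖ * ‖R v - y‖ < ‖T₀‖ * (‖T₀ y‖ / (‖T₀‖ + 1)) + ‖T₀ y‖ / (‖T₀‖ + 1) := by
      nlinarith [norm_nonneg (R v - y), T₀.opNorm_nonneg, mul_le_mul_of_nonneg_left hRv.le T₀.opNorm_nonneg]
    have h3 : ‖T₀‖ * (‖T₀ y‖ / (‖T₀‖ + 1)) + ‖T₀ y‖ / (‖T₀‖ + 1) = ‖T₀ y‖ := by
      field_simp
    linarith
  intro h0
  rw [show (T₀ * R) v = T₀ (R v) from rfl] at h0
  rw [h0] at hkey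
  simp only [zero_sub, norm_neg, lt_self_iff_false] at hkey

/-- `X^F` is dense. -/
lemma dense_XF (hA : IsLSet (A : Set (X →L[ℝ] X))) :
    Dense ((XF (A : Set (X →L[ℝ] X)) : Set X)) := by
  rw [Metric.dense_iff]
  intro u r hr
  obtain ⟨T₀, hT₀A, hT₀ne, hT₀fr⟩ := hA.2
  obtain ⟨x₀, hx₀⟩ : ∃ x₀, T₀ x₀ ≠ 0 := by
    by_contra h
    push_neg at h
    exact hT₀ne (ContinuousLinearMap.ext fun y => by simpa using h y)
  obtain ⟨R, hR, hRv⟩ := hA.1 (T₀ x₀) hx₀ u r hr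
  refine ⟨(R * T₀) x₀, ?_, ?_⟩
  · rw [Metric.mem_ball, dist_eq_norm]
    simpa using hRv
  · exact Submodule.subset_span ⟨R * T₀, mul_mem_AF_left hR ⟨hT₀A, hT₀fr⟩, x₀, rfl⟩

end Stmt17Aux

namespace Stmt17Aux

variable {X : Type*} [NormedAddCommGroup X] [NormedSpace ℝ X]
variable {A : NonUnitalSubalgebra ℝ (X →L[ℝ] X)}

lemma range_le_XF {T : X →L[ℝ] X} (hT : T ∈ AF (A : Set (X →L[ℝ] X))) :
    LinearMap.range (T : X →ₗ[ℝ] X) ≤ XF (A : Set (X →L[ℝ] X)) := by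
  rintro y ⟨x, rfl⟩
  exact Submodule.subset_span ⟨T, hT, x, rfl⟩

/-- The bounded extension of `D ∘ T` for `D` an endomorphism of `X^F` and `T` finite rank. -/
def extMap [CompleteSpace X] (D : Module.End ℝ (XF (A : Set (X →L[ℝ] X)))) {T : X →L[ℝ] X}
    (hT : T ∈ AF (A : Set (X →L[ℝ] X))) : X →L[ℝ] X :=
  letI : FiniteDimensional ℝ (LinearMap.range (T : X →ₗ[ℝ] X)) := hT.2
  let c₁ : X →L[ℝ] (LinearMap.range (T : X →ₗ[ℝ] X)) :=
    T.codRestrict _ (fun x => LinearMap.mem_range_self _ x)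
  let c₂ : (LinearMap.range (T : X →ₗ[ℝ] X)) →ₗ[ℝ] X :=
    (XF (A : Set (X →L[ℝ] X))).subtype ∘ₗ (D ∘ₗ Submodule.inclusion (range_le_XF hT))
  (LinearMap.toContinuousLinearMap c₂).comp c₁

lemma extMap_apply [CompleteSpace X] (D : Module.End ℝ (XF (A : Set (X →L[ℝ] X))))
    {T : X →L[ℝ] X} (hT : T ∈ AF (A : Set (X →L[ℝ] X))) (x : X)
    (hx : T x ∈ XF (A : Set (X →L[ℝ] X))) :
    extMap D hT x = (D ⟨T x, hx⟩ : X) := by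
  letI : FiniteDimensional ℝ (LinearMap.range (T : X →ₗ[ℝ] X)) := hT.2
  simp only [extMap, ContinuousLinearMap.comp_apply, LinearMap.coe_toContinuousLinearMap]
  rfl

/-- Elements of `𝔻` commute with finite-rank elements of `A` on `X^F`. -/
lemma comm_AF {D : Module.End ℝ (XF (A : Set (X →L[ℝ] X)))}
    (hD : D ∈ DD (A : Set (X →L[ℝ] X))) {T : X →L[ℝ] X}
    (hT : T ∈ AF (A : Set (X →L[ℝ] X))) (z : XF (A : Set (X →L[ℝ] X)))
    (h : T (z : X) ∈ XF (A : Set (X →L[ℝ] X))) :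
    (D ⟨T (z : X), h⟩ : X) = T ((D z : XF (A : Set (X →L[ℝ] X))) : X) := by
  have hc := (Subalgebra.mem_centralizer_iff ℝ).1 hD
    ((T : X →ₗ[ℝ] X).restrict (mapsto_XF hT)) ⟨T, hT, rfl⟩
  have := congrArg (fun (f : Module.End ℝ (XF (A : Set (X →L[ℝ] X)))) => f z) hc
  simp only [Module.End.mul_apply, LinearMap.restrict_apply] at this
  have h2 := congrArg Subtype.val this
  simp only [LinearMap.restrict_apply] at h2
  exact (congrArg Subtype.val (congrArg D (Subtype.ext rfl))).trans h2.symm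

variable [CompleteSpace X]

/-- Key: `extMap D (T*S) = T ∘ extMap D S` for `T ∈ A`, `S ∈ A^F`, `D ∈ 𝔻`. -/
lemma extMap_comp (hA : IsLSet (A : Set (X →L[ℝ] X)))
    {D : Module.End ℝ (XF (A : Set (X →L[ℝ] X)))} (hD : D ∈ DD (A : Set (X →L[ℝ] X)))
    {T S : X →L[ℝ] X} (hT : T ∈ (A : Set (X →L[ℝ] X)))
    (hS : S ∈ AF (A : Set (X →L[ℝ] X))) (x : X) :
    extMap D (mul_mem_AF_left hT hS) x = T (extMap D hS x) := by
  have hdense := dense_XF hA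
  have hcont1 : Continuous (⇑(extMap D (mul_mem_AF_left hT hS))) :=
    (extMap D (mul_mem_AF_left hT hS)).continuous
  have hcont2 : Continuous (fun u => T (extMap D hS u)) :=
    T.continuous.comp (extMap D hS).continuous
  have heq : Set.EqOn (⇑(extMap D (mul_mem_AF_left hT hS)))
      (fun u => T (extMap D hS u)) (XF (A : Set (X →L[ℝ] X)) : Set X) := by
    intro u hu
    have h1 : (T * S) u ∈ XF (A : Set (X →L[ℝ] X)) :=
      Submodule.subset_span ⟨T * S, mul_mem_AF_left hT hS, u, rfl⟩
    have h2 : S u ∈ XF (A : Set (X →L[ℝ] X)) :=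
      Submodule.subset_span ⟨S, hS, u, rfl⟩
    show extMap D (mul_mem_AF_left hT hS) u = T (extMap D hS u)
    rw [extMap_apply D (mul_mem_AF_left hT hS) u h1, extMap_apply D hS u h2]
    have c1 := comm_AF hD (mul_mem_AF_left hT hS) ⟨u, hu⟩ h1
    have c2 := comm_AF hD hS ⟨u, hu⟩ h2
    exact c1.trans (congrArg T c2.symm)
  exact congrFun (hcont1.ext_on hdense hcont2 heq) x

lemma mem_XF_of_mem {T : X →L[ℝ] X} (hT : T ∈ (A : Set (X →L[ℝ] X))) {x : X}
    (hx : x ∈ XF (A : Set (X →L[ℝ] X))) : T x ∈ XF (A : Set (X →L[ℝ] X)) := by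
  induction hx using Submodule.span_induction with
  | mem y hy =>
    obtain ⟨S, hS, x', rfl⟩ := hy
    exact Submodule.subset_span ⟨T * S, mul_mem_AF_left hT hS, x', rfl⟩
  | zero => simpa using (XF (A : Set (X →L[ℝ] X))).zero_mem
  | add y z _ _ hy hz => simpa [map_add] using Submodule.add_mem _ hy hz
  | smul a y _ hy => simpa [map_smul] using Submodule.smul_mem _ a hy

/-- Elements of `𝔻` commute with ALL of `A` on `X^F`. -/
lemma comm_all (hA : IsLSet (A : Set (X →L[ℝ] X)))
    {D : Module.End ℝ (XF (A : Set (X →L[ℝ] X)))} (hD : D ∈ DD (A : Set (X →L[ℝ] X)))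
    {T : X →L[ℝ] X} (hT : T ∈ (A : Set (X →L[ℝ] X))) :
    ∀ (x : X) (hx : x ∈ XF (A : Set (X →L[ℝ] X))) (h : T x ∈ XF (A : Set (X →L[ℝ] X))),
      (D ⟨T x, h⟩ : X) = T ((D ⟨x, hx⟩ : XF (A : Set (X →L[ℝ] X))) : X) := by
  intro x hx
  induction hx using Submodule.span_induction with
  | mem y hy =>
    intro h
    obtain ⟨S, hS, x', rfl⟩ := hy
    have h2 : S x' ∈ XF (A : Set (X →L[ℝ] X)) := Submodule.subset_span ⟨S, hS, x', rfl⟩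
    have e1 := extMap_apply D (mul_mem_AF_left hT hS) x' h
    have e2 := extMap_apply D hS x' h2
    have := extMap_comp hA hD hT hS x'
    rw [e1, e2] at this
    exact this
  | zero =>
    intro h
    have e0 : (⟨T 0, h⟩ : XF (A : Set (X →L[ℝ] X))) = 0 := Subtype.ext (by simp)
    have e0' : (⟨(0:X), Submodule.zero_mem _⟩ : XF (A : Set (X →L[ℝ] X))) = 0 :=
      Subtype.ext rfl
    rw [e0, e0']
    simp
  | add y z hy hz ihy ihz =>
    intro h
    have hTy : T y ∈ XF (A : Set (X →L[ℝ] X)) := mem_XF_of_mem hT hy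
    have hTz : T z ∈ XF (A : Set (X →L[ℝ] X)) := mem_XF_of_mem hT hz
    have e1 : (⟨T (y + z), h⟩ : XF (A : Set (X →L[ℝ] X))) = ⟨T y, hTy⟩ + ⟨T z, hTz⟩ :=
      Subtype.ext (by simp)
    have e2 : (⟨y + z, Submodule.add_mem _ hy hz⟩ : XF (A : Set (X →L[ℝ] X))) =
        ⟨y, hy⟩ + ⟨z, hz⟩ := Subtype.ext rfl
    rw [e1, e2, map_add, map_add]
    push_cast
    rw [ihy hTy, ihz hTz]
    simp
  | smul a y hy ihy =>
    intro h
    have hTy : T y ∈ XF (A : Set (X →L[ℝ] X)) := mem_XF_of_mem hT hy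
    have e1 : (⟨T (a • y), h⟩ : XF (A : Set (X →L[ℝ] X))) = a • ⟨T y, hTy⟩ :=
      Subtype.ext (by simp)
    have e2 : (⟨a • y, Submodule.smul_mem _ a hy⟩ : XF (A : Set (X →L[ℝ] X))) =
        a • (⟨y, hy⟩ : XF (A : Set (X →L[ℝ] X))) := Subtype.ext rfl
    rw [e1, e2, map_smul, map_smul]
    push_cast
    rw [ihy hTy]
    simp

end Stmt17Aux

namespace Stmt17Aux

open Quaternion

/-- The quaternion unit `i`. -/
def qI : Quaternion ℝ := ⟨0, 1, 0, 0⟩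
/-- The quaternion unit `j`. -/
def qJ : Quaternion ℝ := ⟨0, 0, 1, 0⟩

lemma qI_sq : qI * qI = -1 := by
  ext <;> simp [Quaternion.re_mul, Quaternion.imI_mul, Quaternion.imJ_mul, Quaternion.imK_mul] <;> simp [qI]

lemma qJ_sq : qJ * qJ = -1 := by
  ext <;> simp [Quaternion.re_mul, Quaternion.imI_mul, Quaternion.imJ_mul, Quaternion.imK_mul] <;> simp [qJ]

lemma qI_qJ : qI * qJ = qJ * (qI * qI * qI) := by
  ext <;> simp [Quaternion.re_mul, Quaternion.imI_mul, Quaternion.imJ_mul, Quaternion.imK_mul] <;> simp [qI, qJ]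

lemma qI_pow_four : qI ^ 4 = 1 := by
  have h : qI ^ 4 = (qI * qI) * (qI * qI) := by
    rw [show (4:ℕ) = 2 + 2 from rfl, pow_add, pow_two]
  rw [h, qI_sq, neg_one_mul, neg_neg]

lemma qI_pow_mod (m : ℕ) : qI ^ m = qI ^ (m % 4) :=
  pow_eq_pow_mod m qI_pow_four

/-- `P i = i`-th power of the quaternion `i`, for `i : ZMod 4`. -/
def P (i : ZMod 4) : Quaternion ℝ := qI ^ i.val

lemma P_add (i j : ZMod 4) : P (i + j) = P i * P j := by
  unfold P
  rw [ZMod.val_add, ← qI_pow_mod, pow_add]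

lemma P_zero : P 0 = 1 := by simp [P]

lemma P_two : P (2 : ZMod 4) = -1 := by
  have h : ((2 : ZMod 4)).val = 2 := rfl
  rw [P, h, pow_two, qI_sq]

lemma pow_qI_qJ (m : ℕ) : qI ^ m * qJ = qJ * qI ^ (3 * m) := by
  induction m with
  | zero => simp
  | succ k ih =>
    have h1 : qI ^ (k + 1) * qJ = qI ^ k * (qI * qJ) := by
      rw [pow_succ, mul_assoc]
    have h3 : qI * qI * qI = qI ^ 3 := by
      rw [show (3:ℕ) = 2 + 1 from rfl, pow_add, pow_two, pow_one]
    have h2 : qI ^ k * (qJ * (qI * qI * qI)) = (qI ^ k * qJ) * qI ^ 3 := by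
      rw [h3, mul_assoc]
    rw [h1, qI_qJ, h2, ih, mul_assoc, ← pow_add]
    congr 1 <;> omega

lemma neg_eq_three_mul (i : ZMod 4) : -i = 3 * i := by revert i; decide

lemma P_qJ (i : ZMod 4) : P i * qJ = qJ * P (-i) := by
  rw [P, pow_qI_qJ, neg_eq_three_mul, P]
  congr 1
  rw [ZMod.val_mul, ← qI_pow_mod, show (ZMod.val (3 : ZMod 4)) = 3 from rfl]

/-- The standard embedding of the quaternion group into `ℍ`. -/
def qq : QuaternionGroup 2 → Quaternion ℝ
  | .a i => P i
  | .xa i => qJ * P i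

lemma qq_one : qq 1 = 1 := by
  rw [QuaternionGroup.one_def]
  exact P_zero

lemma qq_mul (g h : QuaternionGroup 2) : qq (g * h) = qq g * qq h := by
  cases g with
  | a i =>
    cases h with
    | a j => rw [QuaternionGroup.a_mul_a]; exact P_add i j
    | xa j =>
      rw [QuaternionGroup.a_mul_xa]
      show qJ * P (j - i) = P i * (qJ * P j)
      rw [← mul_assoc, P_qJ, mul_assoc, ← P_add]
      congr 1
      ring
  | xa i =>
    cases h with
    | a j =>
      rw [QuaternionGroup.xa_mul_a]
      show qJ * P (i + j) = (qJ * P i) * P j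
      rw [mul_assoc, P_add]
    | xa j =>
      rw [QuaternionGroup.xa_mul_xa]
      show P (((2:ℕ) : ZMod (2*2)) + j - i) = (qJ * P i) * (qJ * P j)
      have e : (qJ * P i) * (qJ * P j) = qJ * (P i * qJ) * P j := by noncomm_ring
      have e2 : qJ * (qJ * P (-i)) * P j = (qJ * qJ) * (P (-i) * P j) := by noncomm_ring
      rw [e, P_qJ, e2, qJ_sq, ← P_add, ← P_two, ← P_add]
      congr 1
      push_cast
      ring

lemma qq_a_two : qq (QuaternionGroup.a 2) = -1 := by
  show P ((2 : ZMod 4)) = -1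
  exact P_two

end Stmt17Aux

set_option synthInstance.maxHeartbeats 1000000
set_option maxHeartbeats 1600000

namespace Stmt17Aux

variable {X : Type*} [NormedAddCommGroup X] [NormedSpace ℝ X] [CompleteSpace X]
variable {A : NonUnitalSubalgebra ℝ (X →L[ℝ] X)}

section Construction

variable (e : DD (A : Set (X →L[ℝ] X)) ≃ₐ[ℝ] Quaternion ℝ)

/-- The action of the quaternion group on `X^F` through `𝔻 ≃ ℍ`. -/
def pi0 (g : QuaternionGroup 2) : Module.End ℝ (XF (A : Set (X →L[ℝ] X))) :=
  (e.symm (qq g) : DD (A : Set (X →L[ℝ] X)))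

lemma pi0_mem (g : QuaternionGroup 2) : pi0 e g ∈ DD (A : Set (X →L[ℝ] X)) :=
  (e.symm (qq g)).2

lemma pi0_one : pi0 e 1 = 1 := by
  unfold pi0
  rw [qq_one, map_one]
  rfl

lemma pi0_mul (g h : QuaternionGroup 2) : pi0 e (g * h) = pi0 e g * pi0 e h := by
  unfold pi0
  rw [qq_mul, map_mul]
  rfl

lemma pi0_a2 : pi0 e (QuaternionGroup.a 2) = -1 := by
  unfold pi0
  rw [qq_a_two, map_neg, map_one]
  rfl

/-- The graph map `x ↦ (π₀(g) x)_g`. -/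
def gam : XF (A : Set (X →L[ℝ] X)) →ₗ[ℝ] (QuaternionGroup 2 → X) :=
  LinearMap.pi fun g => (XF (A : Set (X →L[ℝ] X))).subtype ∘ₗ (pi0 e g)

lemma gam_apply (x : XF (A : Set (X →L[ℝ] X))) (g : QuaternionGroup 2) :
    gam e x g = ((pi0 e g x : XF (A : Set (X →L[ℝ] X))) : X) := rfl

/-- The graph of `π₀`. -/
def Gam : Submodule ℝ (QuaternionGroup 2 → X) := LinearMap.range (gam e)

/-- The closure of the graph. -/
def GamC : Submodule ℝ (QuaternionGroup 2 → X) := (Gam e).topologicalClosure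

lemma Gam_le_GamC : Gam e ≤ GamC e := Submodule.le_topologicalClosure _

lemma GamC_coe : (GamC e : Set (QuaternionGroup 2 → X)) = closure (Gam e : Set _) := rfl

lemma GamC_min {C : Set (QuaternionGroup 2 → X)} (hC : IsClosed C)
    (hsub : (Gam e : Set _) ⊆ C) : (GamC e : Set _) ⊆ C := by
  rw [GamC_coe]
  exact closure_minimal hsub hC

/-- On the closed graph, finite-rank operators intertwine the coordinates via `extMap`. -/
lemma claim1 {v : QuaternionGroup 2 → X} (hv : v ∈ GamC e) (g : QuaternionGroup 2)
    {T : X →L[ℝ] X} (hT : T ∈ AF (A : Set (X →L[ℝ] X))) :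
    T (v g) = extMap (pi0 e g) hT (v 1) := by
  have hC : IsClosed {v : QuaternionGroup 2 → X |
      T (v g) = extMap (pi0 e g) hT (v 1)} :=
    isClosed_eq (T.continuous.comp (continuous_apply g))
      ((extMap (pi0 e g) hT).continuous.comp (continuous_apply 1))
  refine GamC_min e hC ?_ hv
  rintro w ⟨x, rfl⟩
  show T (gam e x g) = extMap (pi0 e g) hT (gam e x 1)
  rw [gam_apply, gam_apply, pi0_one]
  have hx1 : ((1 : Module.End ℝ (XF (A : Set (X →L[ℝ] X)))) x : X) = (x : X) := rfl
  rw [hx1]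
  have hTx : T (x : X) ∈ XF (A : Set (X →L[ℝ] X)) := mapsto_XF hT _ x.2
  rw [extMap_apply (pi0 e g) hT (x : X) hTx]
  exact (comm_AF (pi0_mem e g) hT x hTx).symm

/-- Injectivity of evaluation at `1` on the closed graph. -/
lemma eval_one_inj (hA : IsLSet (A : Set (X →L[ℝ] X))) {v : QuaternionGroup 2 → X}
    (hv : v ∈ GamC e) (h1 : v 1 = 0) : v = 0 := by
  funext g
  by_contra hg
  obtain ⟨T, hT, hTv⟩ := exists_AF_ne_zero hA hg
  have := claim1 e hv g hT
  rw [h1, map_zero] at this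
  exact hTv this

/-- On the closed graph, the coordinate at `a 2` is the negative of the coordinate at `1`. -/
lemma eval_a2 {v : QuaternionGroup 2 → X} (hv : v ∈ GamC e) :
    v (QuaternionGroup.a 2) = -(v 1) := by
  have hC : IsClosed {v : QuaternionGroup 2 → X | v (QuaternionGroup.a 2) = -(v 1)} :=
    isClosed_eq (continuous_apply _) (continuous_apply _).neg
  refine GamC_min e hC ?_ hv
  rintro w ⟨x, rfl⟩
  show gam e x (QuaternionGroup.a 2) = -(gam e x 1)
  rw [gam_apply, gam_apply, pi0_one, pi0_a2]
  rfl

end Construction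

end Stmt17Aux

namespace Stmt17Aux

variable {X : Type*} [NormedAddCommGroup X] [NormedSpace ℝ X] [CompleteSpace X]
variable {A : NonUnitalSubalgebra ℝ (X →L[ℝ] X)}

section Construction2

variable (e : DD (A : Set (X →L[ℝ] X)) ≃ₐ[ℝ] Quaternion ℝ)

/-- Generic principle: a continuous linear self-map of the product preserving the graph
preserves its closure. -/
lemma maps_GamC (L : (QuaternionGroup 2 → X) →ₗ[ℝ] (QuaternionGroup 2 → X))
    (hc : Continuous L)
    (hG : ∀ x : XF (A : Set (X →L[ℝ] X)), ∃ y : XF (A : Set (X →L[ℝ] X)),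
      L (gam e x) = gam e y)
    {v : QuaternionGroup 2 → X} (hv : v ∈ GamC e) : L v ∈ GamC e := by
  have h1 : L '' (Gam e : Set _) ⊆ (Gam e : Set _) := by
    rintro w ⟨u, ⟨x, rfl⟩, rfl⟩
    obtain ⟨y, hy⟩ := hG x
    exact ⟨y, hy.symm⟩
  have h2 : L v ∈ L '' closure (Gam e : Set _) := ⟨v, hv, rfl⟩
  have h3 := image_closure_subset_closure_image (f := ⇑L) (s := (Gam e : Set _)) hc
  have h4 : L v ∈ closure (⇑L '' (Gam e : Set _)) := h3 h2
  exact closure_mono h1 h4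

/-- Right-translation shift on the product. -/
def shiftL (g : QuaternionGroup 2) :
    (QuaternionGroup 2 → X) →ₗ[ℝ] (QuaternionGroup 2 → X) :=
  LinearMap.funLeft ℝ X (fun h => h * g)

lemma shiftL_apply (g : QuaternionGroup 2) (v : QuaternionGroup 2 → X)
    (h : QuaternionGroup 2) : shiftL g v h = v (h * g) := rfl

lemma shiftL_continuous (g : QuaternionGroup 2) :
    Continuous (shiftL (X := X) g) :=
  continuous_pi fun h => continuous_apply (h * g)

lemma shiftL_gam (g : QuaternionGroup 2) (x : XF (A : Set (X →L[ℝ] X))) :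
    shiftL g (gam e x) = gam e (pi0 e g x) := by
  funext h
  rw [shiftL_apply, gam_apply, gam_apply, pi0_mul]
  rfl

lemma shiftL_mem_GamC (g : QuaternionGroup 2) {v : QuaternionGroup 2 → X}
    (hv : v ∈ GamC e) : shiftL g v ∈ GamC e :=
  maps_GamC e _ (shiftL_continuous g) (fun x => ⟨pi0 e g x, shiftL_gam e g x⟩) hv

/-- The dense domain `E` of the representation. -/
def EE : Submodule ℝ X :=
  (GamC e).map (LinearMap.proj (1 : QuaternionGroup 2))

lemma XF_le_EE : XF (A : Set (X →L[ℝ] X)) ≤ EE e := by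
  intro x hx
  refine ⟨gam e ⟨x, hx⟩, Gam_le_GamC e ⟨⟨x, hx⟩, rfl⟩, ?_⟩
  show gam e ⟨x, hx⟩ 1 = x
  rw [gam_apply, pi0_one]
  rfl

lemma dense_EE (hA : IsLSet (A : Set (X →L[ℝ] X))) : Dense ((EE e : Submodule ℝ X) : Set X) :=
  (dense_XF hA).mono (XF_le_EE e)

/-- Evaluation at `1` as a linear map from the closed graph onto `E`. -/
def ev1Raw : (GamC e : Submodule ℝ (QuaternionGroup 2 → X)) →ₗ[ℝ] X :=
  (LinearMap.proj (1 : QuaternionGroup 2)) ∘ₗ (GamC e).subtype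

lemma ev1Raw_mem (v : GamC e) : ev1Raw e v ∈ EE e :=
  ⟨(v : QuaternionGroup 2 → X), v.2, rfl⟩

def ev1 : (GamC e : Submodule ℝ (QuaternionGroup 2 → X)) →ₗ[ℝ] (EE e) :=
  LinearMap.codRestrict (EE e) (ev1Raw e) (ev1Raw_mem e)

lemma ev1_apply (v : GamC e) : ((ev1 e v : EE e) : X) = (v : QuaternionGroup 2 → X) 1 := rfl

lemma ev1_bijective (hA : IsLSet (A : Set (X →L[ℝ] X))) : Function.Bijective (ev1 e) := by
  constructor
  · intro v w hvw
    have h : ((v : QuaternionGroup 2 → X) - w) 1 = 0 := by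
      have := congrArg (fun z => ((z : EE e) : X)) hvw
      simp only [ev1_apply] at this
      simp [this]
    have hmem : ((v : QuaternionGroup 2 → X) - w) ∈ GamC e :=
      Submodule.sub_mem _ v.2 w.2
    have := eval_one_inj e hA hmem h
    exact Subtype.ext (by rwa [sub_eq_zero] at this)
  · rintro ⟨x, v, hv, hvx⟩
    exact ⟨⟨v, hv⟩, Subtype.ext hvx⟩

/-- The inverse of evaluation at `1`. -/
def psi (hA : IsLSet (A : Set (X →L[ℝ] X))) : (EE e) ≃ₗ[ℝ] (GamC e) :=
  (LinearEquiv.ofBijective (ev1 e) (ev1_bijective e hA)).symm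

lemma psi_ev1 (hA : IsLSet (A : Set (X →L[ℝ] X))) (v : GamC e) :
    psi e hA (ev1 e v) = v :=
  (LinearEquiv.ofBijective (ev1 e) (ev1_bijective e hA)).symm_apply_apply v

lemma ev1_psi (hA : IsLSet (A : Set (X →L[ℝ] X))) (x : EE e) :
    ev1 e (psi e hA x) = x :=
  (LinearEquiv.ofBijective (ev1 e) (ev1_bijective e hA)).apply_symm_apply x

lemma psi_coe_one (hA : IsLSet (A : Set (X →L[ℝ] X))) (x : EE e) :
    ((psi e hA x : GamC e) : QuaternionGroup 2 → X) 1 = (x : X) := by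
  have := congrArg (fun z => ((z : EE e) : X)) (ev1_psi e hA x)
  simpa [ev1_apply] using this

lemma eval_mem_EE (g : QuaternionGroup 2) (v : GamC e) :
    (v : QuaternionGroup 2 → X) g ∈ EE e := by
  refine ⟨shiftL g (v : QuaternionGroup 2 → X), shiftL_mem_GamC e g v.2, ?_⟩
  show shiftL g (v : QuaternionGroup 2 → X) 1 = _
  rw [shiftL_apply, one_mul]

/-- Evaluation at `g` as a map from the closed graph to `E`. -/
def evgRaw (g : QuaternionGroup 2) :
    (GamC e : Submodule ℝ (QuaternionGroup 2 → X)) →ₗ[ℝ] X :=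
  (LinearMap.proj g) ∘ₗ (GamC e).subtype

def evg (g : QuaternionGroup 2) : (GamC e : Submodule ℝ (QuaternionGroup 2 → X)) →ₗ[ℝ] (EE e) :=
  LinearMap.codRestrict (EE e) (evgRaw e g) (fun v => eval_mem_EE e g v)

lemma evg_apply (g : QuaternionGroup 2) (v : GamC e) :
    ((evg e g v : EE e) : X) = (v : QuaternionGroup 2 → X) g := rfl

/-- The representation `π` on `E`. -/
def piE (hA : IsLSet (A : Set (X →L[ℝ] X))) (g : QuaternionGroup 2) :
    Module.End ℝ (EE e) :=
  (evg e g) ∘ₗ (psi e hA).toLinearMap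

lemma piE_apply (hA : IsLSet (A : Set (X →L[ℝ] X))) (g : QuaternionGroup 2) (x : EE e) :
    ((piE e hA g x : EE e) : X) = ((psi e hA x : GamC e) : QuaternionGroup 2 → X) g := rfl

lemma psi_piE (hA : IsLSet (A : Set (X →L[ℝ] X))) (g : QuaternionGroup 2) (x : EE e) :
    ((psi e hA (piE e hA g x) : GamC e) : QuaternionGroup 2 → X)
      = shiftL g ((psi e hA x : GamC e) : QuaternionGroup 2 → X) := by
  have hw : shiftL g ((psi e hA x : GamC e) : QuaternionGroup 2 → X) ∈ GamC e :=
    shiftL_mem_GamC e g (psi e hA x).2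
  have h1 : ev1 e ⟨_, hw⟩ = piE e hA g x := by
    apply Subtype.ext
    rw [ev1_apply]
    show shiftL g ((psi e hA x : GamC e) : QuaternionGroup 2 → X) 1 = _
    rw [shiftL_apply, one_mul]
    rfl
  have := psi_ev1 e hA ⟨_, hw⟩
  rw [h1] at this
  exact congrArg Subtype.val this

end Construction2

end Stmt17Aux

namespace Stmt17Aux

variable {X : Type*} [NormedAddCommGroup X] [NormedSpace ℝ X] [CompleteSpace X]
variable {A : NonUnitalSubalgebra ℝ (X →L[ℝ] X)}

section Construction3

variable (e : DD (A : Set (X →L[ℝ] X)) ≃ₐ[ℝ] Quaternion ℝ)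
variable (hA : IsLSet (A : Set (X →L[ℝ] X)))

/-- The representation of the quaternion group associated with a quaternion-type L-algebra. -/
def rho : QRep X where
  domain := EE e
  dense' := dense_EE e hA
  pi := piE e hA
  pi_one := by
    apply LinearMap.ext
    intro x
    apply Subtype.ext
    rw [piE_apply, psi_coe_one]
    rfl
  pi_mul := by
    intro g h
    apply LinearMap.ext
    intro x
    apply Subtype.ext
    show ((psi e hA x : GamC e) : QuaternionGroup 2 → X) (g * h)
      = ((piE e hA g (piE e hA h x) : EE e) : X)
    rw [piE_apply, psi_piE, shiftL_apply]
  pi_neg_one := by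
    apply LinearMap.ext
    intro x
    apply Subtype.ext
    show ((psi e hA x : GamC e) : QuaternionGroup 2 → X) (QuaternionGroup.a 2)
      = (((-1 : Module.End ℝ (EE e)) x : EE e) : X)
    rw [eval_a2 e (psi e hA x).2, psi_coe_one]
    rfl

lemma rho_closed : QRepClosed (rho e hA) := by
  intro x w hw
  have htend : Tendsto (fun n => ((psi e hA (x n) : GamC e) : QuaternionGroup 2 → X))
      atTop (𝓝 w) := by
    rw [tendsto_pi_nhds]
    intro g
    exact hw g
  have hclosed : IsClosed ((GamC e : Submodule ℝ (QuaternionGroup 2 → X)) : Set (QuaternionGroup 2 → X)) :=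
    Submodule.isClosed_topologicalClosure (Gam e)
  have hwmem : w ∈ GamC e :=
    hclosed.mem_of_tendsto htend (Filter.Eventually.of_forall fun n => (psi e hA (x n)).2)
  refine ⟨⟨w 1, ⟨w, hwmem, rfl⟩⟩, fun g => ?_⟩
  have hz : psi e hA ⟨w 1, ⟨w, hwmem, rfl⟩⟩ = ⟨w, hwmem⟩ := by
    have h1 : ev1 e ⟨w, hwmem⟩ = ⟨w 1, ⟨w, hwmem, rfl⟩⟩ := Subtype.ext rfl
    rw [← h1, psi_ev1]
  show w g = ((piE e hA g _ : EE e) : X)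
  exact (congrArg (fun z : GamC e => (z : QuaternionGroup 2 → X) g) hz).symm

end Construction3

end Stmt17Aux

namespace Stmt17Aux

variable {X : Type*} [NormedAddCommGroup X] [NormedSpace ℝ X] [CompleteSpace X]
variable {A : NonUnitalSubalgebra ℝ (X →L[ℝ] X)}

/-- The span of the functionals `h ∘ T`, `T ∈ A^F`. -/
def Wspan (A : NonUnitalSubalgebra ℝ (X →L[ℝ] X)) : Submodule ℝ (X →L[ℝ] ℝ) :=
  Submodule.span ℝ {f : X →L[ℝ] ℝ | ∃ T ∈ AF (A : Set (X →L[ℝ] X)), ∃ h : X →L[ℝ] ℝ,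
    f = h.comp T}

/-- Evaluation of functionals on a finite family of points. -/
def evalFam {ι : Type*} (xs : ι → X) : (X →L[ℝ] ℝ) →ₗ[ℝ] (ι → ℝ) where
  toFun f := fun i => f (xs i)
  map_add' f g := by funext i; simp
  map_smul' c f := by funext i; simp

/-- Exact matching: on any finite family, some element of `Wspan` agrees with a given
functional. -/
lemma matching (hA : IsLSet (A : Set (X →L[ℝ] X))) (F : X →L[ℝ] ℝ)
    {ι : Type*} [Fintype ι] [DecidableEq ι] (xs : ι → X) :
    ∃ f ∈ Wspan A, ∀ i, f (xs i) = F (xs i) := by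
  set Φ := evalFam (X := X) xs with hΦdef
  set p := (Wspan A).map Φ with hpdef
  set d : ι → ℝ := fun i => F (xs i) with hddef
  by_cases hd : d ∈ p
  · obtain ⟨f, hf, hΦf⟩ := hd
    exact ⟨f, hf, fun i => congrFun hΦf i⟩
  exfalso
  obtain ⟨ψf, hψd, hψp⟩ := Submodule.exists_dual_map_eq_bot_of_notMem hd inferInstance
  have hker : p ≤ LinearMap.ker ψf := by
    intro u hu
    rw [LinearMap.mem_ker]
    have : ψf u ∈ p.map ψf := ⟨u, hu, rfl⟩
    rw [hψp] at this
    exact this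
  set c : ι → ℝ := fun i => ψf (Pi.single i 1) with hcdef
  have hψ : ∀ u : ι → ℝ, ψf u = ∑ i, u i * c i := by
    intro u
    have hu : u = ∑ i, Pi.single i (u i) := (Finset.univ_sum_single u).symm
    conv_lhs => rw [hu]
    rw [map_sum]
    congr 1
    funext i
    have : (Pi.single i (u i) : ι → ℝ) = u i • (Pi.single i (1:ℝ) : ι → ℝ) := by
      funext j
      by_cases hji : j = i
      · subst hji; simp
      · simp [Pi.single_eq_of_ne hji]
    rw [this, map_smul, smul_eq_mul]
  set v : X := ∑ i, c i • xs i with hvdef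
  have hW0 : ∀ f ∈ Wspan A, f v = 0 := by
    intro f hf
    have h1 : f v = ∑ i, (Φ f) i * c i := by
      rw [hvdef, map_sum]
      congr 1
      funext i
      rw [map_smul, smul_eq_mul, mul_comm]
      rfl
    rw [h1, ← hψ (Φ f)]
    exact hker ⟨f, hf, rfl⟩
  have hv0 : v = 0 := by
    by_contra hv
    obtain ⟨T, hT, hTv⟩ := exists_AF_ne_zero hA hv
    apply hTv
    apply NormedSpace.eq_zero_of_forall_dual_eq_zero ℝ
    intro h
    have : (h.comp T) v = 0 :=
      hW0 _ (Submodule.subset_span ⟨T, hT, h, rfl⟩)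
    simpa using this
  have hFd : ψf d = F v := by
    rw [hψ d, hvdef, map_sum]
    congr 1
    funext i
    rw [map_smul, smul_eq_mul, mul_comm]
  rw [hv0, map_zero] at hFd
  exact hψd hFd

end Stmt17Aux

namespace Stmt17Aux

variable {X : Type*} [NormedAddCommGroup X] [NormedSpace ℝ X] [CompleteSpace X]
variable {A : NonUnitalSubalgebra ℝ (X →L[ℝ] X)}

section Regular

variable (e : DD (A : Set (X →L[ℝ] X)) ≃ₐ[ℝ] Quaternion ℝ)
variable (hA : IsLSet (A : Set (X →L[ℝ] X)))

lemma claim1' (g : QuaternionGroup 2) {T : X →L[ℝ] X}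
    (hT : T ∈ AF (A : Set (X →L[ℝ] X))) (x : EE e) :
    T (((psi e hA x : GamC e) : QuaternionGroup 2 → X) g)
      = extMap (pi0 e g) hT (x : X) := by
  have h := claim1 e (psi e hA x).2 g hT
  rwa [psi_coe_one] at h

lemma Wspan_bound {f : X →L[ℝ] ℝ} (hf : f ∈ Wspan A) :
    ∃ C > (0:ℝ), ∀ (g : QuaternionGroup 2) (x : EE e),
      |f ((piE e hA g x : EE e) : X)| ≤ C * ‖(x : X)‖ := by
  induction hf using Submodule.span_induction with
  | mem f hfgen =>
    obtain ⟨T, hT, h, rfl⟩ := hfgen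
    refine ⟨(∑ g' : QuaternionGroup 2, ‖h.comp (extMap (pi0 e g') hT)‖) + 1, by positivity,
      fun g x => ?_⟩
    have h1 : (h.comp T) ((piE e hA g x : EE e) : X)
        = (h.comp (extMap (pi0 e g) hT)) (x : X) := by
      rw [ContinuousLinearMap.comp_apply, ContinuousLinearMap.comp_apply, piE_apply,
        claim1' e hA g hT x]
    rw [h1]
    have h2 : |(h.comp (extMap (pi0 e g) hT)) (x : X)|
        ≤ ‖h.comp (extMap (pi0 e g) hT)‖ * ‖(x : X)‖ := by
      rw [← Real.norm_eq_abs]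
      exact (h.comp (extMap (pi0 e g) hT)).le_opNorm _
    have h3 : ‖h.comp (extMap (pi0 e g) hT)‖
        ≤ (∑ g' : QuaternionGroup 2, ‖h.comp (extMap (pi0 e g') hT)‖) + 1 := by
      have := Finset.single_le_sum
        (f := fun g' : QuaternionGroup 2 => ‖h.comp (extMap (pi0 e g') hT)‖)
        (fun g' _ => norm_nonneg _) (Finset.mem_univ g)
      linarith
    calc |(h.comp (extMap (pi0 e g) hT)) (x : X)|
        ≤ ‖h.comp (extMap (pi0 e g) hT)‖ * ‖(x : X)‖ := h2
      _ ≤ ((∑ g' : QuaternionGroup 2, ‖h.comp (extMap (pi0 e g') hT)‖) + 1) * ‖(x : X)‖ :=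
          mul_le_mul_of_nonneg_right h3 (norm_nonneg _)
  | zero => exact ⟨1, one_pos, fun g x => by simp [norm_nonneg]⟩
  | add f₁ f₂ _ _ ih₁ ih₂ =>
    obtain ⟨C₁, hC₁, hb₁⟩ := ih₁
    obtain ⟨C₂, hC₂, hb₂⟩ := ih₂
    refine ⟨C₁ + C₂, by positivity, fun g x => ?_⟩
    have := abs_add_le (f₁ ((piE e hA g x : EE e) : X)) (f₂ ((piE e hA g x : EE e) : X))
    have b1 := hb₁ g x
    have b2 := hb₂ g x
    rw [ContinuousLinearMap.add_apply]
    nlinarith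
  | smul a f₁ _ ih =>
    obtain ⟨C, hC, hb⟩ := ih
    refine ⟨|a| * C + 1, by positivity, fun g x => ?_⟩
    rw [ContinuousLinearMap.coe_smul', Pi.smul_apply, smul_eq_mul, abs_mul]
    have b := hb g x
    nlinarith [abs_nonneg a, norm_nonneg ((x : EE e) : X), abs_nonneg (f₁ ((piE e hA g x : EE e) : X)), norm_nonneg ((x:X))]

end Regular

end Stmt17Aux

namespace Stmt17Aux

variable {X : Type*} [NormedAddCommGroup X] [NormedSpace ℝ X] [CompleteSpace X]
variable {A : NonUnitalSubalgebra ℝ (X →L[ℝ] X)}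

section Final

variable (e : DD (A : Set (X →L[ℝ] X)) ≃ₐ[ℝ] Quaternion ℝ)
variable (hA : IsLSet (A : Set (X →L[ℝ] X)))

lemma rho_regular : QRepRegular (rho e hA) := by
  classical
  intro F'
  rw [mem_closure_iff_nhds]
  intro t ht
  have hemb : IsEmbedding (fun (f : WeakDual ℝ X) (y : X) => topDualPairing ℝ X f y) :=
    WeakBilin.isEmbedding ContinuousLinearMap.coe_injective
  set ι : WeakDual ℝ X → X → ℝ := fun f y => topDualPairing ℝ X f y with hιdef
  have hn : 𝓝 F' = Filter.comap ι (𝓝 (ι F')) := hemb.toIsInducing.nhds_eq_comap F'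
  rw [hn, Filter.mem_comap] at ht
  obtain ⟨V, hV, hVsub⟩ := ht
  rw [nhds_pi, Filter.mem_pi] at hV
  obtain ⟨I, hIfin, s, hs, hsub⟩ := hV
  haveI : Fintype ↥I := hIfin.fintype
  haveI : DecidableEq ↥I := Classical.decEq _
  obtain ⟨f, hfW, hmatch⟩ :=
    matching hA (WeakDual.toStrongDual F') (fun (i : ↥I) => (i : X))
  obtain ⟨C, hC, hb⟩ := Wspan_bound e hA hfW
  refine ⟨StrongDual.toWeakDual f, ?_, ⟨f, ⟨C, hC, fun g x => hb g x⟩, rfl⟩⟩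
  apply hVsub
  show ι (StrongDual.toWeakDual f) ∈ V
  apply hsub
  intro x hxI
  have h1 : ι (StrongDual.toWeakDual f) x = f x := rfl
  have h2 : f x = F' x := hmatch ⟨x, hxI⟩
  rw [h1, h2]
  exact mem_of_mem_nhds (hs x)

lemma rho_algpi {T : X →L[ℝ] X} (hT : T ∈ (A : Set (X →L[ℝ] X))) :
    T ∈ AlgPi (rho e hA) := by
  intro x
  set v : QuaternionGroup 2 → X := ((psi e hA x : GamC e) : QuaternionGroup 2 → X) with hv
  set Θ : (QuaternionGroup 2 → X) →ₗ[ℝ] (QuaternionGroup 2 → X) :=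
    LinearMap.compLeft (T : X →ₗ[ℝ] X) (QuaternionGroup 2) with hΘ
  have hΘcont : Continuous Θ := by
    apply continuous_pi
    intro g
    exact T.continuous.comp (continuous_apply g)
  have hΘgam : ∀ x0 : XF (A : Set (X →L[ℝ] X)), ∃ y0 : XF (A : Set (X →L[ℝ] X)),
      Θ (gam e x0) = gam e y0 := by
    intro x0
    refine ⟨⟨T (x0 : X), mem_XF_of_mem hT x0.2⟩, ?_⟩
    funext g
    show T (gam e x0 g) = gam e _ g
    rw [gam_apply, gam_apply]
    exact (comm_all hA (pi0_mem e g) hT (x0 : X) x0.2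
      (mem_XF_of_mem hT x0.2)).symm
  have hmem : Θ v ∈ GamC e := maps_GamC e Θ hΘcont hΘgam (psi e hA x).2
  have hy1 : (Θ v) 1 = T (x : X) := by
    show T (v 1) = T (x : X)
    exact congrArg T (psi_coe_one e hA x)
  refine ⟨⟨T (x : X), ⟨Θ v, hmem, hy1⟩⟩, rfl, fun g => ?_⟩
  have hpsiy : ((psi e hA ⟨T (x : X), ⟨Θ v, hmem, hy1⟩⟩ : GamC e) : QuaternionGroup 2 → X)
      = Θ v := by
    have h1 : ev1 e ⟨Θ v, hmem⟩ = ⟨T (x : X), ⟨Θ v, hmem, hy1⟩⟩ := Subtype.ext hy1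
    rw [← h1, psi_ev1]
  show T (((rho e hA).pi g x : (rho e hA).domain) : X) = _
  rw [show (((rho e hA).pi g x : (rho e hA).domain) : X)
    = v g from rfl]
  show T (v g) = (((rho e hA).pi g _ : (rho e hA).domain) : X)
  exact (congrArg (fun u => u g) hpsiy).symm

end Final

end Stmt17Aux

/-- Every L-algebra of quaternion type is contained in `𝒜_π` for some
closed and regular representation `π` of the quaternion group on a dense subspace
of `X` with `π(1) = id` and `π(-1) = -id`. -/
theorem stmt17 {X : Type*} [NormedAddCommGroup X] [NormedSpace ℝ X] [CompleteSpace X]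
    (hinf : ¬ FiniteDimensional ℝ X)
    (A : NonUnitalSubalgebra ℝ (X →L[ℝ] X))
    (hA : IsLSet (A : Set (X →L[ℝ] X)))
    (hQ : QuaternionType (A : Set (X →L[ℝ] X))) :
    ∃ ρ : QRep X, QRepClosed ρ ∧ QRepRegular ρ ∧ (A : Set (X →L[ℝ] X)) ⊆ AlgPi ρ := by
  obtain ⟨e⟩ := hQ
  exact ⟨Stmt17Aux.rho e hA, Stmt17Aux.rho_closed e hA, Stmt17Aux.rho_regular e hA,
    fun T hT => Stmt17Aux.rho_algpi e hA hT⟩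

end
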